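/- arXiv:1805.02198 — 3 statements merged into one kernel-verified Lean document; each statement's English description precedes it below -/
import Mathlib

section
/- There exist two non-isomorphic graphs of the same size whose edge-set graphs are isomorphic; specifically, C₃ and K_{1,3} both have edge-set graph K₇. -/
open SimpleGraph

/-- Two edges (as elements of `Sym2 V`) are adjacent in `G` if they are distinct
and share an endpoint. The *edge-set graph* of `G` has as vertices the nonempty
subsets of the edge set of `G`, two distinct subsets being adjacent iff some edge
of one is adjacent to some edge of the other. -/
def edgeSetGraph {V : Type*} (G : SimpleGraph V) :
    SimpleGraph {A : Finset (Sym2 V) // ↑A ⊆ G.edgeSet ∧ A.Nonempty} where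
  Adj A B := A ≠ B ∧ ∃ a ∈ A.1, ∃ b ∈ B.1, a ≠ b ∧ ∃ v, v ∈ a ∧ v ∈ b
  symm := ⟨by
    rintro A B ⟨hne, a, ha, b, hb, hab, v, hv1, hv2⟩
    exact ⟨hne.symm, b, hb, a, ha, hab.symm, v, hv2, hv1⟩⟩
  loopless := ⟨fun A h => h.1 rfl⟩

instance dKB : DecidableRel (completeBipartiteGraph (Fin 1) (Fin 3)).Adj := fun a b => by
  simp only [completeBipartiteGraph]; infer_instance

lemma exists_ne_of_ne {α : Type*} {A B : Finset α} (hA : A.Nonempty) (hB : B.Nonempty)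
    (hAB : A ≠ B) : ∃ a ∈ A, ∃ b ∈ B, a ≠ b := by
  by_contra h
  push_neg at h
  obtain ⟨a, ha⟩ := hA
  obtain ⟨b, hb⟩ := hB
  apply hAB
  ext x
  constructor
  · intro hx; rwa [h x hx b hb]
  · intro hx
    have h1 : a = x := h a ha x hx
    rwa [← h1]

lemma complete_edgeSetGraph {V : Type*} (G : SimpleGraph V)
    (hshare : ∀ a ∈ G.edgeSet, ∀ b ∈ G.edgeSet, a ≠ b → ∃ v, v ∈ a ∧ v ∈ b)
    (e : {A : Finset (Sym2 V) // ↑A ⊆ G.edgeSet ∧ A.Nonempty} ≃ Fin 7) :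
    Nonempty (edgeSetGraph G ≃g (⊤ : SimpleGraph (Fin 7))) := by
  refine ⟨⟨e, ?_⟩⟩
  intro A B
  simp only [top_adj, ne_eq, EmbeddingLike.apply_eq_iff_eq]
  show ¬ A = B ↔ (edgeSetGraph G).Adj A B
  constructor
  · rintro hne
    refine ⟨hne, ?_⟩
    obtain ⟨a, ha, b, hb, hab⟩ := exists_ne_of_ne A.2.2 B.2.2 (fun h => hne (Subtype.ext h))
    exact ⟨a, ha, b, hb, hab, hshare a (A.2.1 ha) b (B.2.1 hb) hab⟩
  · exact fun h => h.1

instance dC : DecidablePred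
    (fun A : Finset (Sym2 (Fin 3)) => ↑A ⊆ (cycleGraph 3).edgeSet ∧ A.Nonempty) := fun A =>
  instDecidableAnd (dp := decidable_of_iff (∀ x ∈ A, x ∈ (cycleGraph 3).edgeSet) Iff.rfl)

instance dB : DecidablePred
    (fun A : Finset (Sym2 (Fin 1 ⊕ Fin 3)) =>
      ↑A ⊆ (completeBipartiteGraph (Fin 1) (Fin 3)).edgeSet ∧ A.Nonempty) := fun A =>
  instDecidableAnd
    (dp := decidable_of_iff (∀ x ∈ A, x ∈ (completeBipartiteGraph (Fin 1) (Fin 3)).edgeSet)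
      Iff.rfl)

lemma cardC : Fintype.card
    {A : Finset (Sym2 (Fin 3)) // ↑A ⊆ (cycleGraph 3).edgeSet ∧ A.Nonempty} = 7 := by decide

set_option maxRecDepth 100000 in
lemma cardB : Fintype.card
    {A : Finset (Sym2 (Fin 1 ⊕ Fin 3)) //
      ↑A ⊆ (completeBipartiteGraph (Fin 1) (Fin 3)).edgeSet ∧ A.Nonempty} = 7 := by decide

lemma shareC : ∀ a ∈ (cycleGraph 3).edgeSet, ∀ b ∈ (cycleGraph 3).edgeSet, a ≠ b →
    ∃ v, v ∈ a ∧ v ∈ b := by decide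

lemma shareB : ∀ a ∈ (completeBipartiteGraph (Fin 1) (Fin 3)).edgeSet,
    ∀ b ∈ (completeBipartiteGraph (Fin 1) (Fin 3)).edgeSet, a ≠ b →
    ∃ v, v ∈ a ∧ v ∈ b := by decide

/-- `C₃` and `K_{1,3}` are non-isomorphic graphs of the same size (3 edges)
whose edge-set graphs are isomorphic (both being `K₇`). -/
theorem stmt5 :
    Nat.card (SimpleGraph.cycleGraph 3).edgeSet =
      Nat.card (completeBipartiteGraph (Fin 1) (Fin 3)).edgeSet ∧
    IsEmpty (SimpleGraph.cycleGraph 3 ≃g completeBipartiteGraph (Fin 1) (Fin 3)) ∧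
    Nonempty (edgeSetGraph (SimpleGraph.cycleGraph 3) ≃g (⊤ : SimpleGraph (Fin 7))) ∧
    Nonempty (edgeSetGraph (completeBipartiteGraph (Fin 1) (Fin 3)) ≃g
      (⊤ : SimpleGraph (Fin 7))) := by
  refine ⟨?_, ⟨fun e => ?_⟩, ?_, ?_⟩
  · have h1 : Nat.card (SimpleGraph.cycleGraph 3).edgeSet = 3 := by
      rw [Nat.card_eq_fintype_card, ← SimpleGraph.edgeFinset_card]; decide
    have h2 : Nat.card (completeBipartiteGraph (Fin 1) (Fin 3)).edgeSet = 3 := by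
      rw [Nat.card_eq_fintype_card, ← SimpleGraph.edgeFinset_card]; decide
    rw [h1, h2]
  · have := Fintype.card_congr e.toEquiv
    simp at this
  · exact complete_edgeSetGraph _ shareC (Fintype.equivFinOfCardEq cardC)
  · exact complete_edgeSetGraph _ shareB (Fintype.equivFinOfCardEq cardB)
end

section
/- A tree T with at least one edge has a complete edge-set graph if and only if diam(T) ≤ 2. -/
open SimpleGraph

section Aux
variable {V : Type*} [Fintype V] {T : SimpleGraph V}

lemma tree_dist_eq (hconn : T.Connected) (hacyc : T.IsAcyclic)
    {s t : V} (p : T.Walk s t) (hp : p.IsPath) : T.dist s t = p.length := by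
  classical
  obtain ⟨w, hw⟩ := hconn.exists_walk_length_eq_dist s t
  have hq : w.bypass.IsPath := Walk.bypass_isPath w
  have huniq := hacyc.path_unique ⟨w.bypass, hq⟩ ⟨p, hp⟩
  have hlen : p.length = w.bypass.length := by
    rw [← congrArg (fun P => Walk.length P.1) huniq]
  have h1 : T.dist s t ≤ p.length := dist_le p
  have h2 : p.length ≤ T.dist s t := by
    rw [hlen, ← hw]; exact Walk.length_bypass_le w
  omega

lemma tree_ediam_ne_top (hconn : T.Connected) : T.ediam ≠ ⊤ := by
  have : Nonempty V := hconn.nonempty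
  obtain ⟨u, v, huv⟩ := exists_edist_eq_ediam_of_finite (G := T)
  rw [← huv]
  exact edist_ne_top_iff_reachable.mpr (hconn u v)

lemma tree_share (hconn : T.Connected) (hacyc : T.IsAcyclic) (hd : T.diam ≤ 2)
    {e f : Sym2 V} (he : e ∈ T.edgeSet) (hf : f ∈ T.edgeSet) (hef : e ≠ f) :
    ∃ w, w ∈ e ∧ w ∈ f := by
  have hnt := tree_ediam_ne_top hconn
  have hdle : ∀ a b : V, T.dist a b ≤ 2 := fun a b => (dist_le_diam hnt).trans hd
  induction e using Sym2.ind with | _ u₁ u₂ =>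
  induction f using Sym2.ind with | _ x y =>
  rw [mem_edgeSet] at he hf
  by_contra hcon
  push_neg at hcon
  have h1x : u₁ ≠ x := fun h => hcon u₁ (Sym2.mem_mk_left _ _) (h ▸ Sym2.mem_mk_left _ _)
  have h1y : u₁ ≠ y := fun h => hcon u₁ (Sym2.mem_mk_left _ _) (h ▸ Sym2.mem_mk_right _ _)
  have h2x : u₂ ≠ x := fun h => hcon u₂ (Sym2.mem_mk_right _ _) (h ▸ Sym2.mem_mk_left _ _)
  have h2y : u₂ ≠ y := fun h => hcon u₂ (Sym2.mem_mk_right _ _) (h ▸ Sym2.mem_mk_right _ _)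
  have hd1x : T.dist u₁ x ≤ 2 := hdle _ _
  have hpos : 0 < T.dist u₁ x := hconn.pos_dist_of_ne h1x
  interval_cases h : T.dist u₁ x
  · -- dist = 1 : Adj u₁ x
    have hadj : T.Adj u₁ x := dist_eq_one_iff_adj.mp h
    have hp : (Walk.cons he.symm (Walk.cons hadj (Walk.cons hf Walk.nil)) :
        T.Walk u₂ y).IsPath := by
      simp [Walk.isPath_def]
      exact ⟨⟨he.ne', h2x, h2y⟩, ⟨hadj.ne, h1y⟩, hf.ne⟩
    have h3 : T.dist u₂ y = 3 := by
      simpa using tree_dist_eq hconn hacyc _ hp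
    have := hdle u₂ y
    omega
  · -- dist = 2 : middle vertex
    obtain ⟨p, hp⟩ := hconn.exists_walk_length_eq_dist u₁ x
    rw [h] at hp
    set w := p.getVert 1 with hwdef
    have ha : T.Adj u₁ w := by
      have := p.adj_getVert_succ (i := 0) (by omega)
      simpa [Walk.getVert_zero] using this
    have hb : T.Adj w x := by
      have := p.adj_getVert_succ (i := 1) (by omega)
      rwa [show (1 : ℕ) + 1 = p.length by omega, Walk.getVert_length] at this
    by_cases hw : w = u₂
    · rw [hw] at ha hb
      have hp2 : (Walk.cons he (Walk.cons hb (Walk.cons hf Walk.nil)) :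
          T.Walk u₁ y).IsPath := by
        simp [Walk.isPath_def]
        exact ⟨⟨he.ne, h1x, h1y⟩, ⟨hb.ne, h2y⟩, hf.ne⟩
      have h3 : T.dist u₁ y = 3 := by
        simpa using tree_dist_eq hconn hacyc _ hp2
      have := hdle u₁ y
      omega
    · have hp2 : (Walk.cons he.symm (Walk.cons ha (Walk.cons hb Walk.nil)) :
          T.Walk u₂ x).IsPath := by
        simp [Walk.isPath_def]
        exact ⟨⟨he.ne', fun hh => hw hh.symm, h2x⟩, ⟨ha.ne, h1x⟩, hb.ne⟩
      have h3 : T.dist u₂ x = 3 := by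
        simpa using tree_dist_eq hconn hacyc _ hp2
      have := hdle u₂ x
      omega

end Aux

/-- A tree `T` with at least one edge has a complete edge-set graph if and only
if `diam T ≤ 2`. -/
theorem stmt6 {V : Type*} [Fintype V] (T : SimpleGraph V)
    (hconn : T.Connected) (hacyc : T.IsAcyclic) (he : T.edgeSet.Nonempty) :
    edgeSetGraph T = ⊤ ↔ T.diam ≤ 2 := by
  have hnt := tree_ediam_ne_top hconn
  constructor
  · intro hcomp
    by_contra hd
    push_neg at hd
    have : Nonempty V := hconn.nonempty
    obtain ⟨u, v, huv⟩ := exists_dist_eq_diam (G := T)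
    have hd3 : 3 ≤ T.dist u v := by omega
    obtain ⟨p, hp⟩ := hconn.exists_walk_length_eq_dist u v
    -- first edge
    have hl : 1 ≤ p.length := by omega
    have ha : T.Adj u (p.getVert 1) := by
      have := p.adj_getVert_succ (i := 0) (by omega)
      simpa using this
    have hb : T.Adj (p.getVert (p.length - 1)) v := by
      have := p.adj_getVert_succ (i := p.length - 1) (by omega)
      rwa [show p.length - 1 + 1 = p.length by omega, Walk.getVert_length] at this
    set a := p.getVert 1
    set b := p.getVert (p.length - 1)
    have he1 : s(u, a) ∈ T.edgeSet := ha
    have he2 : s(b, v) ∈ T.edgeSet := hb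
    have hA : (↑({s(u,a)} : Finset (Sym2 V)) : Set (Sym2 V)) ⊆ T.edgeSet ∧
        ({s(u,a)} : Finset (Sym2 V)).Nonempty := by
      constructor
      · intro x hx; simp at hx; subst hx; exact he1
      · exact Finset.singleton_nonempty _
    have hB : (↑({s(b,v)} : Finset (Sym2 V)) : Set (Sym2 V)) ⊆ T.edgeSet ∧
        ({s(b,v)} : Finset (Sym2 V)).Nonempty := by
      constructor
      · intro x hx; simp at hx; subst hx; exact he2
      · exact Finset.singleton_nonempty _
    set A : {A : Finset (Sym2 V) // ↑A ⊆ T.edgeSet ∧ A.Nonempty} := ⟨_, hA⟩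
    set B : {A : Finset (Sym2 V) // ↑A ⊆ T.edgeSet ∧ A.Nonempty} := ⟨_, hB⟩
    -- if some vertex is shared between the two edges, dist u v ≤ 2
    have hkey : ∀ wv : V, wv ∈ s(u,a) → wv ∈ s(b,v) → False := by
      intro wv hw1 hw2
      have hduw : T.dist u wv ≤ 1 := by
        rcases Sym2.mem_iff.mp hw1 with rfl | rfl
        · simp [SimpleGraph.dist_self]
        · exact le_of_eq (dist_eq_one_iff_adj.mpr ha)
      have hdwv : T.dist wv v ≤ 1 := by
        rcases Sym2.mem_iff.mp hw2 with rfl | rfl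
        · exact le_of_eq (dist_eq_one_iff_adj.mpr hb)
        · simp [SimpleGraph.dist_self]
      have := hconn.dist_triangle (u := u) (v := wv) (w := v)
      omega
    have hAB : A ≠ B := by
      intro hEq
      have : s(u,a) = s(b,v) := by
        have := congrArg Subtype.val hEq
        simpa [A, B] using this
      exact hkey u (Sym2.mem_mk_left _ _) (this ▸ Sym2.mem_mk_left _ _)
    have hadj : (edgeSetGraph T).Adj A B := by
      rw [hcomp]
      exact hAB
    obtain ⟨-, x, hx, y, hy, hxy, wv, hw1, hw2⟩ := hadj
    simp only [A, B, Finset.mem_singleton] at hx hy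
    subst hx; subst hy
    exact hkey wv hw1 hw2
  · intro hd
    ext A B
    simp only [top_adj]
    constructor
    · exact fun h => h.1
    · intro hAB
      refine ⟨hAB, ?_⟩
      have hne : A.1 ≠ B.1 := fun h => hAB (Subtype.ext h)
      by_cases hsub : A.1 ⊆ B.1
      · obtain ⟨b, hbB, hbA⟩ := Finset.exists_of_ssubset ⟨hsub, fun h => hne (le_antisymm hsub h)⟩
        obtain ⟨a, haA⟩ := A.2.2
        have hab : a ≠ b := fun h => hbA (h ▸ haA)
        obtain ⟨wv, hw⟩ := tree_share hconn hacyc hd (A.2.1 haA) (B.2.1 hbB) hab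
        exact ⟨a, haA, b, hbB, hab, wv, hw⟩
      · obtain ⟨a, haA, haB⟩ := Finset.not_subset.mp hsub
        obtain ⟨b, hbB⟩ := B.2.2
        have hab : a ≠ b := fun h => haB (h ▸ hbB)
        obtain ⟨wv, hw⟩ := tree_share hconn hacyc hd (A.2.1 haA) (B.2.1 hbB) hab
        exact ⟨a, haA, b, hbB, hab, wv, hw⟩
end

section
/- The chromatic number of the edge-set graph of the path P₄ (path on 4 vertices, 3 edges) equals 5. -/
open SimpleGraph

/-- The edge-set graph of the path `P_{n+1}`, whose edges are `e_1, …, e_n`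
(indexed here by `Fin n`), with `e_i ~ e_j` iff `|i - j| = 1`.  Its vertices are
the nonempty subsets of the edge set, two distinct subsets `A, B` being adjacent
iff some `a ∈ A` and `b ∈ B` are adjacent edges of the path. -/
def pathSetGraph (n : ℕ) : SimpleGraph {A : Finset (Fin n) // A.Nonempty} where
  Adj A B := A ≠ B ∧ ∃ a ∈ A.1, ∃ b ∈ B.1, ((a : ℕ) + 1 = b ∨ (b : ℕ) + 1 = a)
  symm := ⟨by
    rintro A B ⟨hne, a, ha, b, hb, hab⟩
    exact ⟨hne.symm, b, hb, a, ha, hab.symm⟩⟩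
  loopless := ⟨fun A h => h.1 rfl⟩

instance : DecidableRel (pathSetGraph 3).Adj := fun A B => by
  unfold pathSetGraph; exact instDecidableAnd

/-- An explicit 5-coloring of `pathSetGraph 3`. -/
def pathSetGraphCol (A : {A : Finset (Fin 3) // A.Nonempty}) : Fin 5 :=
  if 1 ∉ A.1 then 0 else if 0 ∈ A.1 then (if 2 ∈ A.1 then 4 else 2)
  else if 2 ∈ A.1 then 3 else 1

/-- Helper to name vertices of `pathSetGraph 3`. -/
def pathSetGraphVert (s : Finset (Fin 3)) : {A : Finset (Fin 3) // A.Nonempty} :=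
  if h : s.Nonempty then ⟨s, h⟩ else ⟨{0}, by decide⟩

/-- The chromatic number of the edge-set graph of the path `P₄` (3 edges) is 5. -/
theorem stmt9 : (pathSetGraph 3).chromaticNumber = 5 := by
  refine le_antisymm ?_ ?_
  · have : (pathSetGraph 3).Colorable 5 := ⟨⟨pathSetGraphCol, by decide⟩⟩
    simpa using this.chromaticNumber_le
  · have hcl : (pathSetGraph 3).IsClique
        ({pathSetGraphVert {1}, pathSetGraphVert {0,2}, pathSetGraphVert {0,1},
          pathSetGraphVert {1,2}, pathSetGraphVert {0,1,2}} :
          Finset {A : Finset (Fin 3) // A.Nonempty}) := by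
      rw [isClique_iff, Set.Pairwise]
      intro a ha b hb hne
      rw [Finset.mem_coe] at ha hb
      fin_cases ha <;> fin_cases hb <;>
        first | (exfalso; exact hne rfl) | decide
    have := hcl.card_le_chromaticNumber
    refine le_trans (le_of_eq ?_) this
    norm_cast
end
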